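/- One-step descent under biased and noisy gradients: if the step size satisfies 0 < η ≤ 1/((M+1)L) and x' = x − η(∇f(x) + b + δ), where x is a square-integrable random vector, b and δ are random vectors satisfying almost surely ‖b‖ ≤ φ·‖∇f(x)‖ with 0 < φ < 1, E[⟨δ, ∇f(x)⟩] = 0, E[⟨δ, b⟩] = 0, and E[‖δ‖²] ≤ M·E[‖b + ∇f(x)‖²] + σ², then E[f(x')] ≤ E[f(x)] + (η/2)(φ − 1)·E[‖∇f(x)‖²] + (Lη²/2)·σ². -/

import Mathlib

open MeasureTheory
open scoped RealInnerProductSpace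

lemma descent_aux {d : ℕ} (f : EuclideanSpace ℝ (Fin d) → ℝ)
    (f' : EuclideanSpace ℝ (Fin d) → EuclideanSpace ℝ (Fin d))
    (hgrad : ∀ y, HasGradientAt f (f' y) y)
    (L : ℝ) (hL : 0 < L) (hlip : ∀ y z, ‖f' y - f' z‖ ≤ L * ‖y - z‖)
    (y u : EuclideanSpace ℝ (Fin d)) :
    f (y + u) ≤ f y + ⟪f' y, u⟫ + L / 2 * ‖u‖ ^ 2 := by
  have hcont : Continuous f' := by
    have : LipschitzWith (Real.toNNReal L) f' := by
      apply LipschitzWith.of_dist_le_mul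
      intro a c
      rw [dist_eq_norm, dist_eq_norm]
      calc ‖f' a - f' c‖ ≤ L * ‖a - c‖ := hlip a c
        _ = (Real.toNNReal L : ℝ) * ‖a - c‖ := by rw [Real.coe_toNNReal L hL.le]
    exact this.continuous
  have key : ∀ t : ℝ, HasDerivAt (fun s : ℝ => f (y + s • u)) ⟪f' (y + t • u), u⟫ t := by
    intro t
    have h1 : HasDerivAt (fun s : ℝ => y + s • u) u t := by
      simpa using ((hasDerivAt_id t).smul_const u).const_add y
    have h2 := (hasGradientAt_iff_hasFDerivAt.mp (hgrad (y + t • u)))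
    have h3 := h2.comp_hasDerivAt t h1
    simp at h3
    exact h3
  have cont' : Continuous fun t : ℝ => ⟪f' (y + t • u), u⟫ :=
    (hcont.comp (by continuity)).inner continuous_const
  have heq : ∫ t in (0:ℝ)..1, ⟪f' (y + t • u), u⟫ = f (y + u) - f y := by
    have := intervalIntegral.integral_eq_sub_of_hasDerivAt
      (fun t _ => key t) (cont'.intervalIntegrable 0 1)
    simpa using this
  have hbound : ∫ t in (0:ℝ)..1, ⟪f' (y + t • u), u⟫
      ≤ ∫ t in (0:ℝ)..1, (⟪f' y, u⟫ + L * t * ‖u‖ ^ 2) := by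
    apply intervalIntegral.integral_mono_on (by norm_num)
      (cont'.intervalIntegrable 0 1)
      ((by fun_prop : Continuous fun t : ℝ => ⟪f' y, u⟫ + L * t * ‖u‖ ^ 2).intervalIntegrable 0 1)
    intro t ht
    have h1 : ⟪f' (y + t • u) - f' y, u⟫ ≤ ‖f' (y + t • u) - f' y‖ * ‖u‖ :=
      real_inner_le_norm _ _
    have h2 : ‖f' (y + t • u) - f' y‖ ≤ L * (t * ‖u‖) := by
      have := hlip (y + t • u) y
      simpa [norm_smul, abs_of_nonneg ht.1] using this
    have h3 : ‖f' (y + t • u) - f' y‖ * ‖u‖ ≤ L * (t * ‖u‖) * ‖u‖ :=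
      mul_le_mul_of_nonneg_right h2 (norm_nonneg u)
    have h4 : ⟪f' (y + t • u), u⟫ - ⟪f' y, u⟫ = ⟪f' (y + t • u) - f' y, u⟫ := by
      rw [inner_sub_left]
    nlinarith [h1, h3]
  have hval : ∫ t in (0:ℝ)..1, (⟪f' y, u⟫ + L * t * ‖u‖ ^ 2)
      = ⟪f' y, u⟫ + L / 2 * ‖u‖ ^ 2 := by
    rw [intervalIntegral.integral_add (intervalIntegrable_const)
      ((by fun_prop : Continuous fun t : ℝ => L * t * ‖u‖ ^ 2).intervalIntegrable 0 1)]
    simp only [intervalIntegral.integral_const, smul_eq_mul]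
    have : ∫ t in (0:ℝ)..1, L * t * ‖u‖ ^ 2 = L / 2 * ‖u‖ ^ 2 := by
      have : (fun t : ℝ => L * t * ‖u‖ ^ 2) = fun t : ℝ => t * (L * ‖u‖ ^ 2) := by
        funext t; ring
      rw [this, intervalIntegral.integral_mul_const, integral_id]
      ring
    rw [this]; ring
  linarith [heq ▸ hbound, hval ▸ hbound]
set_option maxHeartbeats 1600000 in
theorem stmt_14 {d : ℕ} (hd : 1 ≤ d)
    (f : EuclideanSpace ℝ (Fin d) → ℝ)
    (f' : EuclideanSpace ℝ (Fin d) → EuclideanSpace ℝ (Fin d))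
    (hgrad : ∀ y, HasGradientAt f (f' y) y)
    (L : ℝ) (hL : 0 < L) (hlip : ∀ y z, ‖f' y - f' z‖ ≤ L * ‖y - z‖)
    (M σ : ℝ) (hM : 0 ≤ M) (hσ : 0 ≤ σ)
    (φ : ℝ) (hφ0 : 0 < φ) (hφ1 : φ < 1)
    (η : ℝ) (hη0 : 0 < η) (hη1 : η ≤ 1 / ((M + 1) * L))
    {Ω : Type*} [MeasurableSpace Ω] (P : Measure Ω) [IsProbabilityMeasure P]
    (x b δ : Ω → EuclideanSpace ℝ (Fin d))
    (hxL2 : MemLp x 2 P) (hbL2 : MemLp b 2 P) (hδL2 : MemLp δ 2 P)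
    (hbias : ∀ᵐ ω ∂P, ‖b ω‖ ≤ φ * ‖f' (x ω)‖)
    (hδmean1 : ∫ ω, ⟪δ ω, f' (x ω)⟫ ∂P = 0)
    (hδmean2 : ∫ ω, ⟪δ ω, b ω⟫ ∂P = 0)
    (hδvar : ∫ ω, ‖δ ω‖ ^ 2 ∂P ≤ M * ∫ ω, ‖b ω + f' (x ω)‖ ^ 2 ∂P + σ ^ 2)
    (hf_int : Integrable (fun ω => f (x ω)) P)
    (hf'_int : Integrable (fun ω => f (x ω - η • (f' (x ω) + b ω + δ ω))) P)
    (hgrad_int : Integrable (fun ω => ‖f' (x ω)‖ ^ 2) P)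
    (hip1 : Integrable (fun ω => ⟪δ ω, f' (x ω)⟫) P)
    (hip2 : Integrable (fun ω => ⟪δ ω, b ω⟫) P)
    (hip3 : Integrable (fun ω => ⟪b ω, f' (x ω)⟫) P) :
    ∫ ω, f (x ω - η • (f' (x ω) + b ω + δ ω)) ∂P
      ≤ ∫ ω, f (x ω) ∂P + η / 2 * (φ - 1) * ∫ ω, ‖f' (x ω)‖ ^ 2 ∂P
        + L * η ^ 2 / 2 * σ ^ 2 := by
  have hFb : Integrable (fun ω => ‖b ω‖ ^ 2) P := hbL2.norm.integrable_sq
  have hFδ : Integrable (fun ω => ‖δ ω‖ ^ 2) P := hδL2.norm.integrable_sq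
  -- pointwise descent bound
  have hpt : ∀ ω, f (x ω - η • (f' (x ω) + b ω + δ ω))
      ≤ f (x ω) + (-η) * (‖f' (x ω)‖ ^ 2 + ⟪b ω, f' (x ω)⟫ + ⟪δ ω, f' (x ω)⟫)
        + (L * η ^ 2 / 2) * (‖f' (x ω)‖ ^ 2 + 2 * ⟪b ω, f' (x ω)⟫ + ‖b ω‖ ^ 2
            + 2 * ⟪δ ω, f' (x ω)⟫ + 2 * ⟪δ ω, b ω⟫ + ‖δ ω‖ ^ 2) := by
    intro ω
    have h0 := descent_aux f f' hgrad L hL hlip (x ω)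
      (-(η • (f' (x ω) + b ω + δ ω)))
    have e1 : ⟪f' (x ω), -(η • (f' (x ω) + b ω + δ ω))⟫
        = -η * (‖f' (x ω)‖ ^ 2 + ⟪b ω, f' (x ω)⟫ + ⟪δ ω, f' (x ω)⟫) := by
      rw [inner_neg_right, real_inner_smul_right, inner_add_right, inner_add_right,
        real_inner_self_eq_norm_sq, real_inner_comm (f' (x ω)) (b ω),
        real_inner_comm (f' (x ω)) (δ ω)]
      ring
    have expand : ‖f' (x ω) + b ω + δ ω‖ ^ 2
        = ‖f' (x ω)‖ ^ 2 + 2 * ⟪b ω, f' (x ω)⟫ + ‖b ω‖ ^ 2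
            + 2 * ⟪δ ω, f' (x ω)⟫ + 2 * ⟪δ ω, b ω⟫ + ‖δ ω‖ ^ 2 := by
      rw [norm_add_sq_real (f' (x ω) + b ω) (δ ω), norm_add_sq_real (f' (x ω)) (b ω),
        inner_add_left]
      linarith [real_inner_comm (f' (x ω)) (b ω), real_inner_comm (f' (x ω)) (δ ω),
        real_inner_comm (b ω) (δ ω)]
    have e2 : ‖-(η • (f' (x ω) + b ω + δ ω))‖ ^ 2
        = η ^ 2 * (‖f' (x ω)‖ ^ 2 + 2 * ⟪b ω, f' (x ω)⟫ + ‖b ω‖ ^ 2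
            + 2 * ⟪δ ω, f' (x ω)⟫ + 2 * ⟪δ ω, b ω⟫ + ‖δ ω‖ ^ 2) := by
      rw [norm_neg, norm_smul, mul_pow, ← expand]
      simp [sq_abs]
    rw [sub_eq_add_neg, ← neg_smul η, neg_smul]
    calc f (x ω + -(η • (f' (x ω) + b ω + δ ω)))
        ≤ f (x ω) + ⟪f' (x ω), -(η • (f' (x ω) + b ω + δ ω))⟫
          + L / 2 * ‖-(η • (f' (x ω) + b ω + δ ω))‖ ^ 2 := h0
      _ = _ := by rw [e1, e2]; ring
  -- integrability of the majorant
  have I1 : Integrable (fun ω => ‖f' (x ω)‖ ^ 2 + ⟪b ω, f' (x ω)⟫ + ⟪δ ω, f' (x ω)⟫) P :=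
    (hgrad_int.add hip3).add hip1
  have I2 : Integrable (fun ω => ‖f' (x ω)‖ ^ 2 + 2 * ⟪b ω, f' (x ω)⟫ + ‖b ω‖ ^ 2
      + 2 * ⟪δ ω, f' (x ω)⟫ + 2 * ⟪δ ω, b ω⟫ + ‖δ ω‖ ^ 2) P :=
    ((((hgrad_int.add (hip3.const_mul 2)).add hFb).add (hip1.const_mul 2)).add
      (hip2.const_mul 2)).add hFδ
  have J1 : Integrable (fun ω => (-η) * (‖f' (x ω)‖ ^ 2 + ⟪b ω, f' (x ω)⟫
      + ⟪δ ω, f' (x ω)⟫)) P := by exact I1.const_mul (-η)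
  have J2 : Integrable (fun ω => (L * η ^ 2 / 2) * (‖f' (x ω)‖ ^ 2
      + 2 * ⟪b ω, f' (x ω)⟫ + ‖b ω‖ ^ 2 + 2 * ⟪δ ω, f' (x ω)⟫ + 2 * ⟪δ ω, b ω⟫
      + ‖δ ω‖ ^ 2)) P := by exact I2.const_mul _
  have J0 : Integrable (fun ω => f (x ω) + (-η) * (‖f' (x ω)‖ ^ 2 + ⟪b ω, f' (x ω)⟫
      + ⟪δ ω, f' (x ω)⟫)) P := by exact hf_int.add J1
  have hmono : ∫ ω, f (x ω - η • (f' (x ω) + b ω + δ ω)) ∂P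
      ≤ ∫ ω, (f (x ω) + (-η) * (‖f' (x ω)‖ ^ 2 + ⟪b ω, f' (x ω)⟫ + ⟪δ ω, f' (x ω)⟫)
        + (L * η ^ 2 / 2) * (‖f' (x ω)‖ ^ 2 + 2 * ⟪b ω, f' (x ω)⟫ + ‖b ω‖ ^ 2
            + 2 * ⟪δ ω, f' (x ω)⟫ + 2 * ⟪δ ω, b ω⟫ + ‖δ ω‖ ^ 2)) ∂P :=
    integral_mono hf'_int (by exact J0.add J2) hpt
  set A := ∫ ω, ‖f' (x ω)‖ ^ 2 ∂P with hA
  set Bv := ∫ ω, ⟪b ω, f' (x ω)⟫ ∂P with hBv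
  set C := ∫ ω, ‖b ω‖ ^ 2 ∂P with hCdef
  set Dv := ∫ ω, ‖δ ω‖ ^ 2 ∂P with hDv
  have hI1 : ∫ ω, (‖f' (x ω)‖ ^ 2 + ⟪b ω, f' (x ω)⟫ + ⟪δ ω, f' (x ω)⟫) ∂P = A + Bv := by
    have K1 : Integrable (fun ω => ‖f' (x ω)‖ ^ 2 + ⟪b ω, f' (x ω)⟫) P := by
      exact hgrad_int.add hip3
    rw [integral_add K1 hip1, integral_add hgrad_int hip3, hδmean1, add_zero]
  have hI2 : ∫ ω, (‖f' (x ω)‖ ^ 2 + 2 * ⟪b ω, f' (x ω)⟫ + ‖b ω‖ ^ 2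
      + 2 * ⟪δ ω, f' (x ω)⟫ + 2 * ⟪δ ω, b ω⟫ + ‖δ ω‖ ^ 2) ∂P = A + 2 * Bv + C + Dv := by
    have K2 : Integrable (fun ω => ‖f' (x ω)‖ ^ 2 + 2 * ⟪b ω, f' (x ω)⟫) P := by
      exact hgrad_int.add (hip3.const_mul 2)
    have K3 : Integrable (fun ω => ‖f' (x ω)‖ ^ 2 + 2 * ⟪b ω, f' (x ω)⟫ + ‖b ω‖ ^ 2) P := by
      exact K2.add hFb
    have K4 : Integrable (fun ω => ‖f' (x ω)‖ ^ 2 + 2 * ⟪b ω, f' (x ω)⟫ + ‖b ω‖ ^ 2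
        + 2 * ⟪δ ω, f' (x ω)⟫) P := by exact K3.add (hip1.const_mul 2)
    have K5 : Integrable (fun ω => ‖f' (x ω)‖ ^ 2 + 2 * ⟪b ω, f' (x ω)⟫ + ‖b ω‖ ^ 2
        + 2 * ⟪δ ω, f' (x ω)⟫ + 2 * ⟪δ ω, b ω⟫) P := by exact K4.add (hip2.const_mul 2)
    rw [integral_add K5 hFδ, integral_add K4 (hip2.const_mul 2),
      integral_add K3 (hip1.const_mul 2), integral_add K2 hFb,
      integral_add hgrad_int (hip3.const_mul 2),
      integral_const_mul, integral_const_mul, integral_const_mul, hδmean1, hδmean2]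
    ring
  rw [integral_add J0 J2, integral_add hf_int J1, integral_const_mul, integral_const_mul,
    hI1, hI2] at hmono
  have hS : ∫ ω, ‖b ω + f' (x ω)‖ ^ 2 ∂P = C + 2 * Bv + A := by
    have hcongr : ∀ ω, ‖b ω + f' (x ω)‖ ^ 2
        = ‖b ω‖ ^ 2 + 2 * ⟪b ω, f' (x ω)⟫ + ‖f' (x ω)‖ ^ 2 :=
      fun ω => norm_add_sq_real _ _
    rw [integral_congr_ae (Filter.Eventually.of_forall hcongr),
      integral_add (show Integrable (fun ω => ‖b ω‖ ^ 2 + 2 * ⟪b ω, f' (x ω)⟫) P by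
        exact hFb.add (hip3.const_mul 2)) hgrad_int,
      integral_add hFb (hip3.const_mul 2), integral_const_mul]
  have hSnn : 0 ≤ C + 2 * Bv + A := hS ▸ integral_nonneg fun ω => sq_nonneg _
  have hD : Dv ≤ M * (C + 2 * Bv + A) + σ ^ 2 := by rw [← hS]; exact hδvar
  have hA0 : 0 ≤ A := integral_nonneg fun ω => sq_nonneg _
  have hC : C ≤ φ ^ 2 * A := by
    have hCle : C ≤ ∫ ω, φ ^ 2 * ‖f' (x ω)‖ ^ 2 ∂P := by
      apply integral_mono_ae hFb (hgrad_int.const_mul _)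
      filter_upwards [hbias] with ω h
      nlinarith [norm_nonneg (b ω), norm_nonneg (f' (x ω))]
    rwa [integral_const_mul, ← hA] at hCle
  have hη' : η * ((M + 1) * L) ≤ 1 := by
    rw [le_div_iff₀ (by positivity)] at hη1; linarith
  nlinarith [hmono,
    mul_le_mul_of_nonneg_left hD (by positivity : (0:ℝ) ≤ L * η ^ 2 / 2),
    mul_nonneg (mul_nonneg hη0.le hSnn) (sub_nonneg.2 hη'),
    mul_le_mul_of_nonneg_left hC (by positivity : (0:ℝ) ≤ η / 2),
    mul_nonneg (by positivity : (0:ℝ) ≤ η / 2)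
      (mul_nonneg (by nlinarith : (0:ℝ) ≤ φ - φ ^ 2) hA0)]
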